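/- For every j ∈ {2,…,d_c−1} and all y ∈ (0,1], the function G_j(y) := j(r̂_{j+1}(y) − r̂_j(y))/x is differentiable and satisfies dG_j/dy = −j (x'/x) G_{j+1} + (j−1)(x'/x) G_j, where G_{d_c} := −d_c r̂_{d_c}/x. (Derivative identity for the mean residual-degree functions, used in the proofs of Lemmas 2 and 3.) -/

import Mathlib

open Finset

namespace LDPC

/-- λ(y) = Σ_{k∈L} λ_k y^{k-1} -/
noncomputable def lamP (L : Finset ℕ) (lam : ℕ → ℝ) (y : ℝ) : ℝ :=
  ∑ k ∈ L, lam k * y ^ (k - 1)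

/-- λ'(y) = Σ_{k∈L} (k-1) λ_k y^{k-2} -/
noncomputable def lamD (L : Finset ℕ) (lam : ℕ → ℝ) (y : ℝ) : ℝ :=
  ∑ k ∈ L, ((k : ℝ) - 1) * lam k * y ^ (k - 2)

/-- λ''(y) = Σ_{k∈L} (k-1)(k-2) λ_k y^{k-3} -/
noncomputable def lamDD (L : Finset ℕ) (lam : ℕ → ℝ) (y : ℝ) : ℝ :=
  ∑ k ∈ L, ((k : ℝ) - 1) * ((k : ℝ) - 2) * lam k * y ^ (k - 3)

/-- ρ(z) = Σ_{k∈R} ρ_k z^{k-1} -/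
noncomputable def rhoP (R : Finset ℕ) (rho : ℕ → ℝ) (z : ℝ) : ℝ :=
  ∑ k ∈ R, rho k * z ^ (k - 1)

/-- ρ'(z) = Σ_{k∈R} (k-1) ρ_k z^{k-2} -/
noncomputable def rhoD (R : Finset ℕ) (rho : ℕ → ℝ) (z : ℝ) : ℝ :=
  ∑ k ∈ R, ((k : ℝ) - 1) * rho k * z ^ (k - 2)

/-- x = ελ(y) -/
noncomputable def xF (L : Finset ℕ) (lam : ℕ → ℝ) (ε y : ℝ) : ℝ := ε * lamP L lam y

/-- x' = ελ'(y) -/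
noncomputable def xD (L : Finset ℕ) (lam : ℕ → ℝ) (ε y : ℝ) : ℝ := ε * lamD L lam y

/-- x'' = ελ''(y) -/
noncomputable def xDD (L : Finset ℕ) (lam : ℕ → ℝ) (ε y : ℝ) : ℝ := ε * lamDD L lam y

/-- e = xy -/
noncomputable def eF (L : Finset ℕ) (lam : ℕ → ℝ) (ε y : ℝ) : ℝ := xF L lam ε y * y

/-- a = (x'y + x)/x -/
noncomputable def aF (L : Finset ℕ) (lam : ℕ → ℝ) (ε y : ℝ) : ℝ :=
  (xD L lam ε y * y + xF L lam ε y) / xF L lam ε y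

/-- l̂_k(y) = ε λ_k y^k -/
noncomputable def lhat (lam : ℕ → ℝ) (ε : ℝ) (k : ℕ) (y : ℝ) : ℝ := ε * lam k * y ^ k

/-- r̂_j(y); for j = 1 the special formula x(y-1+ρ(1-x)), else Σ_{i∈R} ρ_i C(i-1,j-1) x^j (1-x)^{i-j}. -/
noncomputable def rhat (L R : Finset ℕ) (lam rho : ℕ → ℝ) (ε : ℝ) (j : ℕ) (y : ℝ) : ℝ :=
  if j = 1 then xF L lam ε y * (y - 1 + rhoP R rho (1 - xF L lam ε y))
  else ∑ i ∈ R, rho i * ((i - 1).choose (j - 1) : ℝ) * xF L lam ε y ^ j *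
    (1 - xF L lam ε y) ^ (i - j)

/-- G_j(y) = j(r̂_{j+1} - r̂_j)/x for j ≤ d_c - 1, and G_{d_c}(y) = -d_c r̂_{d_c}/x. -/
noncomputable def Gf (L R : Finset ℕ) (lam rho : ℕ → ℝ) (ε : ℝ) (dc j : ℕ) (y : ℝ) : ℝ :=
  if j = dc then -((dc : ℝ) * rhat L R lam rho ε dc y) / xF L lam ε y
  else (j : ℝ) * (rhat L R lam rho ε (j + 1) y - rhat L R lam rho ε j y) / xF L lam ε y

/-- F(y) = Σ_{k∈L} (λ_k/k)[ε²(y^k-1)² + ε(y^k-1)] -/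
noncomputable def Ff (L : Finset ℕ) (lam : ℕ → ℝ) (ε y : ℝ) : ℝ :=
  ∑ k ∈ L, lam k / (k : ℝ) * (ε ^ 2 * (y ^ k - 1) ^ 2 + ε * (y ^ k - 1))

/-- F'(y) = 2Σ_{k∈L} ε²λ_k y^{2k-1} - (ε - ε̃)x -/
noncomputable def Fd (L : Finset ℕ) (lam : ℕ → ℝ) (ε y : ℝ) : ℝ :=
  2 * ∑ k ∈ L, ε ^ 2 * lam k * y ^ (2 * k - 1) - (ε - (1 - ε)) * xF L lam ε y

/-- V_{i,j}(y) = Σ_{s∈R} sρ_s C(s-1,i-1)C(s-1,j-1) x^{i+j} (1-x)^{2s-i-j} -/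
noncomputable def Vf (L R : Finset ℕ) (lam rho : ℕ → ℝ) (ε : ℝ) (i j : ℕ) (y : ℝ) : ℝ :=
  ∑ s ∈ R, (s : ℝ) * rho s * ((s - 1).choose (i - 1) : ℝ) * ((s - 1).choose (j - 1) : ℝ) *
    xF L lam ε y ^ (i + j) * (1 - xF L lam ε y) ^ (2 * s - i - j)

/-- The variable–variable block of covariance evolution, with its initial conditions. -/
def CEvv (L : Finset ℕ) (lam : ℕ → ℝ) (ε : ℝ) (δll : ℕ → ℕ → ℝ → ℝ) : Prop :=
  (∀ k ∈ L, ∀ s ∈ L, ∀ y ∈ Set.Ioc (0 : ℝ) 1,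
    HasDerivWithinAt (δll k s)
      (-(xF L lam ε y) *
          (((s : ℝ) * lhat lam ε s y / eF L lam ε y ^ 2) * ∑ t ∈ L, δll k t y
            + ((k : ℝ) * lhat lam ε k y / eF L lam ε y ^ 2) * ∑ t ∈ L, δll s t y
            - (((k : ℝ) + (s : ℝ)) / eF L lam ε y) * δll k s y)
        - xF L lam ε y * (k : ℝ) * (s : ℝ) * (lhat lam ε k y / eF L lam ε y) *
            ((if k = s then (1 : ℝ) else 0) - lhat lam ε s y / eF L lam ε y))
      (Set.Ioc 0 1) y)
  ∧ ∀ k ∈ L, ∀ s ∈ L,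
      δll k s 1 = (if k = s then (1 : ℝ) else 0) * (k : ℝ) * lam k * ε * (1 - ε)

/-- The variable–check block of covariance evolution, with its initial conditions. -/
def CEvc (L R : Finset ℕ) (lam rho : ℕ → ℝ) (ε : ℝ) (dc : ℕ)
    (δll δlr : ℕ → ℕ → ℝ → ℝ) : Prop :=
  (∀ k ∈ L, ∀ j ∈ Finset.Icc 1 (dc - 1), ∀ y ∈ Set.Ioc (0 : ℝ) 1,
    HasDerivWithinAt (δlr k j)
      (2 * (xD L lam ε y / eF L lam ε y) * Gf L R lam rho ε dc j y * ∑ t ∈ L, δll k t y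
        - (Gf L R lam rho ε dc j y / y ^ 2) * ∑ i ∈ L, ((i : ℝ) - 1) * δll k i y
        - xF L lam ε y * (aF L lam ε y - (k : ℝ)) * ((k : ℝ) * lhat lam ε k y / eF L lam ε y)
            * (Gf L R lam rho ε dc j y / y)
        - ((k : ℝ) * lhat lam ε k y / (eF L lam ε y * y)) * ∑ t ∈ L, δlr t j y
        + ((k : ℝ) / y) * δlr k j y
        - (j : ℝ) * (xD L lam ε y / xF L lam ε y) *
            ((if j + 1 = dc then
                (∑ t ∈ L, δll k t y) - ∑ j' ∈ Finset.Icc 1 (dc - 1), δlr k j' y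
              else δlr k (j + 1) y) - δlr k j y))
      (Set.Ioc 0 1) y)
  ∧ ∀ k ∈ L, ∀ j ∈ Finset.Icc 1 (dc - 1),
      δlr k j 1 = -((k : ℝ) * lam k * ε * (1 - ε)) * Gf L R lam rho ε dc j 1

/-- The check–check block of covariance evolution, with symmetry and initial conditions. -/
def CErr (L R : Finset ℕ) (lam rho : ℕ → ℝ) (ε : ℝ) (dc : ℕ)
    (δlr δrr : ℕ → ℕ → ℝ → ℝ) : Prop :=
  (∀ i ∈ Finset.Icc 1 (dc - 1), ∀ j ∈ Finset.Icc 1 (dc - 1), ∀ y ∈ Set.Ioc (0 : ℝ) 1,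
      δrr i j y = δrr j i y)
  ∧ (∀ i ∈ Finset.Icc 1 (dc - 1), ∀ j ∈ Finset.Icc 1 (dc - 1), ∀ y ∈ Set.Ioc (0 : ℝ) 1,
    HasDerivWithinAt (δrr i j)
      (-(xD L lam ε y / xF L lam ε y) *
          ((i : ℝ) * (if i + 1 = dc then
                (∑ k ∈ L, δlr k j y) - ∑ i' ∈ Finset.Icc 1 (dc - 1), δrr i' j y
              else δrr (i + 1) j y)
            + (j : ℝ) * (if j + 1 = dc then
                (∑ k ∈ L, δlr k i y) - ∑ i' ∈ Finset.Icc 1 (dc - 1), δrr i' i y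
              else δrr (j + 1) i y)
            - ((i : ℝ) + (j : ℝ)) * δrr i j y)
        + (∑ k ∈ L, ((2 * aF L lam ε y - (k : ℝ) - 1) / y ^ 2) *
            (δlr k j y * Gf L R lam rho ε dc i y + δlr k i y * Gf L R lam rho ε dc j y))
        - xF L lam ε y *
            (((xDD L lam ε y * xF L lam ε y - xD L lam ε y ^ 2) / xF L lam ε y ^ 2) *
                Gf L R lam rho ε dc i y * Gf L R lam rho ε dc j y
              + (i : ℝ) * (j : ℝ) * (xD L lam ε y / xF L lam ε y ^ 2) *
                  ((if i = j then rhat L R lam rho ε (j + 1) y + rhat L R lam rho ε j y else 0)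
                    - (if i = j + 1 then rhat L R lam rho ε i y else 0)
                    - (if j = i + 1 then rhat L R lam rho ε j y else 0))))
      (Set.Ioc 0 1) y)
  ∧ ∀ i ∈ Finset.Icc 1 (dc - 1), ∀ j ∈ Finset.Icc 1 (dc - 1),
      δrr i j 1 = (if i = j then (i : ℝ) * rhat L R lam rho ε i 1 else 0)
        - Vf L R lam rho ε i j 1
        + (∑ k ∈ L, ((k : ℝ) - 1) * lam k) * ε * (1 - ε) *
            Gf L R lam rho ε dc i 1 * Gf L R lam rho ε dc j 1

/-- Auxiliary: S_{i,j}(x) = C(i-1,j-1) x^{j-1} (1-x)^{i-j}. -/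
noncomputable def Sfx (i j : ℕ) (x : ℝ) : ℝ :=
  ((i - 1).choose (j - 1) : ℝ) * x ^ (j - 1) * (1 - x) ^ (i - j)

/-- Auxiliary: derivative of S_{i,j}. -/
noncomputable def Dsx (i j : ℕ) (x : ℝ) : ℝ :=
  ((i - 1).choose (j - 1) : ℝ) * (((j : ℝ) - 1) * x ^ (j - 2) * (1 - x) ^ (i - j)
    - ((i - j : ℕ) : ℝ) * x ^ (j - 1) * (1 - x) ^ (i - j - 1))

/-- Auxiliary: uniform formula for G_j. -/
noncomputable def Hfx (L R : Finset ℕ) (lam rho : ℕ → ℝ) (ε : ℝ) (j : ℕ) (y : ℝ) : ℝ :=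
  (j : ℝ) * ∑ i ∈ R, rho i * (Sfx i (j + 1) (xF L lam ε y) - Sfx i j (xF L lam ε y))

lemma choose_id (i j : ℕ) (hj : 1 ≤ j) :
    ((i - 1).choose (j - 1) : ℝ) * ((i - j : ℕ) : ℝ) = (j : ℝ) * ((i - 1).choose j : ℝ) := by
  have h1 : (j - 1) + 1 = j := by omega
  have h2 : (i - 1) - (j - 1) = i - j := by omega
  have h := Nat.choose_succ_right_eq (i - 1) (j - 1)
  rw [h1, h2] at h
  have h' := congrArg (fun n : ℕ => (n : ℝ)) h
  push_cast at h'
  linarith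

lemma hasDerivAt_Sfx (i j : ℕ) (hj : 2 ≤ j) (x : ℝ) :
    HasDerivAt (fun x => Sfx i j x) (Dsx i j x) x := by
  have h1 : HasDerivAt (fun x : ℝ => x ^ (j - 1)) (((j : ℝ) - 1) * x ^ (j - 2)) x := by
    have h := hasDerivAt_pow (j - 1) x
    have e : j - 1 - 1 = j - 2 := by omega
    have hj1 : 1 ≤ j := by omega
    have c : ((j - 1 : ℕ) : ℝ) = (j : ℝ) - 1 := by rw [Nat.cast_sub hj1, Nat.cast_one]
    rw [e, c] at h
    exact h
  have h2 : HasDerivAt (fun x : ℝ => (1 - x) ^ (i - j))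
      (-(((i - j : ℕ) : ℝ) * (1 - x) ^ (i - j - 1))) x := by
    have hinner : HasDerivAt (fun x : ℝ => 1 - x) (-1 : ℝ) x := by
      exact (hasDerivAt_id' x).const_sub (1 : ℝ)
    have h := (hasDerivAt_pow (i - j) (1 - x)).comp x hinner
    refine h.congr_deriv ?_
    ring
  have h3 := (h1.mul h2).const_mul (((i - 1).choose (j - 1) : ℝ))
  have hfun : (fun x => Sfx i j x)
      = fun x : ℝ => ((i - 1).choose (j - 1) : ℝ) * (x ^ (j - 1) * (1 - x) ^ (i - j)) := by
    funext x; simp [Sfx, mul_assoc]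
  rw [hfun]
  refine h3.congr_deriv ?_
  simp only [Dsx]
  ring

lemma keyx (i j : ℕ) (hj : 2 ≤ j) (x : ℝ) :
    x * Dsx i j x = ((j : ℝ) - 1) * Sfx i j x - (j : ℝ) * Sfx i (j + 1) x := by
  have e1 : x * x ^ (j - 2) = x ^ (j - 1) := by
    rw [← pow_succ']; congr 1; omega
  have e2 : x * x ^ (j - 1) = x ^ j := by
    rw [← pow_succ']; congr 1; omega
  have e3 : i - (j + 1) = i - j - 1 := by omega
  have e4 : (j + 1) - 1 = j := by omega
  have hc := choose_id i j (by omega)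
  unfold Dsx Sfx
  rw [e4, e3, ← e1, ← e2]
  push_cast
  linear_combination (-(x * (x * x ^ (j - 2)) * (1 - x) ^ (i - j - 1))) * hc
    - (x * (j : ℝ) * ((i - 1).choose j : ℝ) * (1 - x) ^ (i - j - 1)) * e1

lemma rhat_eq (L R : Finset ℕ) (lam rho : ℕ → ℝ) (ε : ℝ) (j : ℕ) (hj : 2 ≤ j) (y : ℝ) :
    rhat L R lam rho ε j y = xF L lam ε y * ∑ i ∈ R, rho i * Sfx i j (xF L lam ε y) := by
  unfold rhat
  rw [if_neg (by omega), Finset.mul_sum]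
  refine Finset.sum_congr rfl fun i _ => ?_
  unfold Sfx
  have e : xF L lam ε y * xF L lam ε y ^ (j - 1) = xF L lam ε y ^ j := by
    rw [← pow_succ']; congr 1; omega
  rw [← e]; ring

lemma Sfx_top (i dc : ℕ) (hi : i ≤ dc) (hdc : 1 ≤ dc) (x : ℝ) : Sfx i (dc + 1) x = 0 := by
  unfold Sfx
  have h : (i - 1).choose ((dc + 1) - 1) = 0 := Nat.choose_eq_zero_of_lt (by omega)
  rw [h]; simp

lemma xF_pos (L : Finset ℕ) (hL : L.Nonempty) (lam : ℕ → ℝ) (hlamPos : ∀ k ∈ L, 0 < lam k)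
    (ε : ℝ) (hε : 0 < ε) (y : ℝ) (hy : 0 < y) : 0 < xF L lam ε y := by
  unfold xF lamP
  exact mul_pos hε (Finset.sum_pos (fun k hk => mul_pos (hlamPos k hk) (pow_pos hy _)) hL)

lemma hasDerivAt_xF (L : Finset ℕ) (hL2 : ∀ k ∈ L, 2 ≤ k) (lam : ℕ → ℝ) (ε y : ℝ) :
    HasDerivAt (fun z => xF L lam ε z) (xD L lam ε y) y := by
  have h : HasDerivAt (fun z : ℝ => ∑ k ∈ L, lam k * z ^ (k - 1))
      (∑ k ∈ L, ((k : ℝ) - 1) * lam k * y ^ (k - 2)) y := by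
    apply HasDerivAt.fun_sum
    intro k hk
    have h2 : 2 ≤ k := hL2 k hk
    have hp := (hasDerivAt_pow (k - 1) y).const_mul (lam k)
    have e : k - 1 - 1 = k - 2 := by omega
    have hk1 : 1 ≤ k := by omega
    have c : ((k - 1 : ℕ) : ℝ) = (k : ℝ) - 1 := by rw [Nat.cast_sub hk1, Nat.cast_one]
    rw [e, c] at hp
    refine hp.congr_deriv ?_
    ring
  have h' := h.const_mul ε
  unfold xF xD lamP lamD
  exact h'

lemma GH (L R : Finset ℕ) (lam rho : ℕ → ℝ) (ε : ℝ) (dc j : ℕ)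
    (hj : 2 ≤ j) (hjdc : j ≤ dc) (hle : ∀ i ∈ R, i ≤ dc) (y : ℝ)
    (hx : xF L lam ε y ≠ 0) :
    Gf L R lam rho ε dc j y = Hfx L R lam rho ε j y := by
  unfold Gf Hfx
  by_cases hcase : j = dc
  · subst hcase
    rw [if_pos rfl, rhat_eq L R lam rho ε j hj y]
    have hz : ∀ i ∈ R, Sfx i (j + 1) (xF L lam ε y) = 0 := fun i hi =>
      Sfx_top i j (hle i hi) (by omega) _
    have hzz : ∑ i ∈ R, rho i * (Sfx i (j + 1) (xF L lam ε y) - Sfx i j (xF L lam ε y))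
        = ∑ i ∈ R, rho i * (0 - Sfx i j (xF L lam ε y)) :=
      Finset.sum_congr rfl fun i hi => by rw [hz i hi]
    rw [hzz]
    have hs : ∑ i ∈ R, rho i * (0 - Sfx i j (xF L lam ε y))
        = -∑ i ∈ R, rho i * Sfx i j (xF L lam ε y) := by
      rw [← Finset.sum_neg_distrib]
      exact Finset.sum_congr rfl fun i _ => by ring
    rw [hs]
    field_simp
  · rw [if_neg hcase, rhat_eq L R lam rho ε j hj y,
      rhat_eq L R lam rho ε (j + 1) (by omega) y]
    have hs : ∑ i ∈ R, rho i * (Sfx i (j + 1) (xF L lam ε y) - Sfx i j (xF L lam ε y))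
        = (∑ i ∈ R, rho i * Sfx i (j + 1) (xF L lam ε y))
          - ∑ i ∈ R, rho i * Sfx i j (xF L lam ε y) := by
      rw [← Finset.sum_sub_distrib]
      exact Finset.sum_congr rfl fun i _ => by ring
    rw [hs]
    field_simp

theorem statement_19
    (L R : Finset ℕ) (hL : L.Nonempty) (hR : R.Nonempty)
    (hL2 : ∀ k ∈ L, 2 ≤ k) (hR2 : ∀ k ∈ R, 2 ≤ k)
    (lam rho : ℕ → ℝ)
    (hlamPos : ∀ k ∈ L, 0 < lam k) (hlamSum : ∑ k ∈ L, lam k = 1)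
    (hrhoPos : ∀ k ∈ R, 0 < rho k) (hrhoSum : ∑ k ∈ R, rho k = 1)
    (ε : ℝ) (hε : ε ∈ Set.Ioo (0 : ℝ) 1)
    (dc : ℕ) (hdc : dc = R.max' hR) :
    ∀ j ∈ Finset.Icc 2 (dc - 1), ∀ y ∈ Set.Ioc (0 : ℝ) 1,
      HasDerivWithinAt (fun z => Gf L R lam rho ε dc j z)
        (-(j : ℝ) * (xD L lam ε y / xF L lam ε y) * Gf L R lam rho ε dc (j + 1) y
          + ((j : ℝ) - 1) * (xD L lam ε y / xF L lam ε y) * Gf L R lam rho ε dc j y)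
        (Set.Ioc 0 1) y := by
  intro j hjmem y hy
  rw [Finset.mem_Icc] at hjmem
  obtain ⟨hj2, hjle⟩ := hjmem
  obtain ⟨hy0, hy1⟩ := hy
  have hdc2 : 2 ≤ dc := by
    obtain ⟨r, hrR⟩ := hR
    have h1 := R.le_max' r hrR
    have h2 := hR2 r hrR
    omega
  have hjdc : j ≤ dc := by omega
  have hle : ∀ i ∈ R, i ≤ dc := fun i hi => hdc ▸ R.le_max' i hi
  have hxpos : ∀ z ∈ Set.Ioc (0 : ℝ) 1, (0 : ℝ) < xF L lam ε z := fun z hz =>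
    xF_pos L hL lam hlamPos ε hε.1 z hz.1
  have hxy : xF L lam ε y ≠ 0 := ne_of_gt (hxpos y ⟨hy0, hy1⟩)
  have hGHj : ∀ z, xF L lam ε z ≠ 0 →
      Gf L R lam rho ε dc j z = Hfx L R lam rho ε j z :=
    fun z hz => GH L R lam rho ε dc j hj2 hjdc hle z hz
  have hGH1 : Gf L R lam rho ε dc (j + 1) y = Hfx L R lam rho ε (j + 1) y :=
    GH L R lam rho ε dc (j + 1) (by omega) (by omega) hle y hxy
  set x : ℝ := xF L lam ε y with hxdef
  set x' : ℝ := xD L lam ε y with hx'def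
  have hdx : HasDerivAt (fun z => xF L lam ε z) x' y := hasDerivAt_xF L hL2 lam ε y
  have hder : HasDerivAt (fun z => Hfx L R lam rho ε j z)
      ((j : ℝ) * ∑ i ∈ R, rho i * (Dsx i (j + 1) x * x' - Dsx i j x * x')) y := by
    unfold Hfx
    apply HasDerivAt.const_mul
    apply HasDerivAt.fun_sum
    intro i hi
    exact (((hasDerivAt_Sfx i (j + 1) (by omega) x).comp y hdx).sub
      ((hasDerivAt_Sfx i j hj2 x).comp y hdx)).const_mul (rho i)
  have hsum : x * (∑ i ∈ R, rho i * (Dsx i (j + 1) x * x' - Dsx i j x * x'))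
      = x' * ∑ i ∈ R, rho i * (2 * (j : ℝ) * Sfx i (j + 1) x
          - ((j : ℝ) + 1) * Sfx i (j + 2) x - ((j : ℝ) - 1) * Sfx i j x) := by
    rw [Finset.mul_sum, Finset.mul_sum]
    refine Finset.sum_congr rfl fun i _ => ?_
    have k1 := keyx i j hj2 x
    have k2 := keyx i (j + 1) (by omega) x
    have e12 : j + 1 + 1 = j + 2 := by omega
    rw [e12] at k2
    push_cast at k2
    linear_combination x' * rho i * k2 - x' * rho i * k1
  have hval : ((j : ℝ) * ∑ i ∈ R, rho i * (Dsx i (j + 1) x * x' - Dsx i j x * x'))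
      = -(j : ℝ) * (x' / x) * Hfx L R lam rho ε (j + 1) y
        + ((j : ℝ) - 1) * (x' / x) * Hfx L R lam rho ε j y := by
    unfold Hfx
    rw [← hxdef]
    have e12 : j + 1 + 1 = j + 2 := by omega
    rw [e12]
    have hs1 : ∑ i ∈ R, rho i * (Sfx i (j + 1) x - Sfx i j x)
        = (∑ i ∈ R, rho i * Sfx i (j + 1) x) - ∑ i ∈ R, rho i * Sfx i j x := by
      rw [← Finset.sum_sub_distrib]; exact Finset.sum_congr rfl fun i _ => by ring
    have hs2 : ∑ i ∈ R, rho i * (Sfx i (j + 2) x - Sfx i (j + 1) x)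
        = (∑ i ∈ R, rho i * Sfx i (j + 2) x) - ∑ i ∈ R, rho i * Sfx i (j + 1) x := by
      rw [← Finset.sum_sub_distrib]; exact Finset.sum_congr rfl fun i _ => by ring
    have hs3 : ∑ i ∈ R, rho i * (2 * (j : ℝ) * Sfx i (j + 1) x
          - ((j : ℝ) + 1) * Sfx i (j + 2) x - ((j : ℝ) - 1) * Sfx i j x)
        = 2 * (j : ℝ) * (∑ i ∈ R, rho i * Sfx i (j + 1) x)
          - ((j : ℝ) + 1) * (∑ i ∈ R, rho i * Sfx i (j + 2) x)
          - ((j : ℝ) - 1) * ∑ i ∈ R, rho i * Sfx i j x := by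
      rw [Finset.mul_sum, Finset.mul_sum, Finset.mul_sum, ← Finset.sum_sub_distrib,
        ← Finset.sum_sub_distrib]
      exact Finset.sum_congr rfl fun i _ => by ring
    rw [hs1, hs2]
    rw [hs3] at hsum
    have hD : ∑ i ∈ R, rho i * (Dsx i (j + 1) x * x' - Dsx i j x * x')
        = (x' * (2 * (j : ℝ) * (∑ i ∈ R, rho i * Sfx i (j + 1) x)
            - ((j : ℝ) + 1) * (∑ i ∈ R, rho i * Sfx i (j + 2) x)
            - ((j : ℝ) - 1) * ∑ i ∈ R, rho i * Sfx i j x)) / x := by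
      rw [eq_div_iff hxy]
      linear_combination hsum
    rw [hD]
    push_cast
    field_simp
    ring
  rw [hGH1, hGHj y hxy, ← hval]
  refine HasDerivWithinAt.congr hder.hasDerivWithinAt ?_ (hGHj y hxy)
  intro z hz
  exact hGHj z (ne_of_gt (hxpos z hz))

end LDPC
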